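/- In ℚ[[z]], the series f_1(z) = Σ_{n≥0} C(2n,n)^2·z^n and f_2(z) = Σ_{n≥0} (−1/(2n−1))·C(2n,n)^2·z^n satisfy the two identities f_1(z) = f_2(z) − 2z·f_2′(z) and f_2(z) = (1 − 16z)·( f_1(z) + 2z·f_1′(z) ), where f′ denotes the formal derivative of the power series f. -/

import Mathlib

open PowerSeries

/-- Key recurrence for central binomial coefficients squared, in `ℚ`. -/
lemma key_rec (m : ℕ) :
    ((m : ℚ) + 1) ^ 2 * ((Nat.choose (2 * (m + 1)) (m + 1) : ℚ)) ^ 2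
      = 4 * (2 * (m : ℚ) + 1) ^ 2 * ((Nat.choose (2 * m) m : ℚ)) ^ 2 := by
  have h := Nat.succ_mul_centralBinom_succ m
  have h' : ((m : ℚ) + 1) * (Nat.choose (2 * (m + 1)) (m + 1) : ℚ)
      = 2 * (2 * (m : ℚ) + 1) * (Nat.choose (2 * m) m : ℚ) := by
    have := congrArg (fun k : ℕ => (k : ℚ)) h
    simp only [Nat.centralBinom] at this
    push_cast at this
    convert this using 2
  calc ((m : ℚ) + 1) ^ 2 * ((Nat.choose (2 * (m + 1)) (m + 1) : ℚ)) ^ 2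
      = (((m : ℚ) + 1) * (Nat.choose (2 * (m + 1)) (m + 1) : ℚ)) ^ 2 := by ring
    _ = (2 * (2 * (m : ℚ) + 1) * (Nat.choose (2 * m) m : ℚ)) ^ 2 := by rw [h']
    _ = 4 * (2 * (m : ℚ) + 1) ^ 2 * ((Nat.choose (2 * m) m : ℚ)) ^ 2 := by ring

lemma coeff_two_X_mul (n : ℕ) (g : PowerSeries ℚ) :
    PowerSeries.coeff (R := ℚ) n (2 * PowerSeries.X * g)
      = if n = 0 then 0 else 2 * PowerSeries.coeff (R := ℚ) (n - 1) g := by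
  have : (2 : ℚ⟦X⟧) * PowerSeries.X * g = PowerSeries.X * (2 * g) := by ring
  rw [this]
  cases n with
  | zero => simp
  | succ m =>
    rw [PowerSeries.coeff_succ_X_mul]
    simp [two_mul]

lemma coeff_16_mul (n : ℕ) (g : PowerSeries ℚ) :
    PowerSeries.coeff (R := ℚ) n (16 * g) = 16 * PowerSeries.coeff (R := ℚ) n g := by
  rw [(map_ofNat (PowerSeries.C (R := ℚ)) 16).symm, PowerSeries.coeff_C_mul]

lemma coeff_derivativeFun_q (f : PowerSeries ℚ) (n : ℕ) :
    PowerSeries.coeff n f.derivativeFun = PowerSeries.coeff (n + 1) f * (n + 1) :=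
  PowerSeries.coeff_derivative f n

/-- In `ℚ[[z]]`, with `f₁(z) = ∑ C(2n,n)² zⁿ` and `f₂(z) = ∑ (−1/(2n−1)) C(2n,n)² zⁿ`,
one has `f₁ = f₂ − 2z f₂′` and `f₂ = (1 − 16z) (f₁ + 2z f₁′)`. -/
theorem stmt9
    (f₁ f₂ : PowerSeries ℚ)
    (hf₁ : f₁ = PowerSeries.mk fun n => ((Nat.choose (2 * n) n : ℚ)) ^ 2)
    (hf₂ : f₂ = PowerSeries.mk fun n =>
      ((-1 : ℚ) / (2 * (n : ℚ) - 1)) * (Nat.choose (2 * n) n : ℚ) ^ 2) :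
    f₁ = f₂ - 2 * PowerSeries.X * f₂.derivativeFun ∧
      f₂ = (1 - 16 * PowerSeries.X) * (f₁ + 2 * PowerSeries.X * f₁.derivativeFun) := by
  subst hf₁ hf₂
  constructor
  · ext n
    rw [map_sub, coeff_two_X_mul, PowerSeries.coeff_mk]
    cases n with
    | zero => norm_num
    | succ m =>
      rw [PowerSeries.coeff_mk]
      simp only [Nat.succ_ne_zero, if_false, Nat.add_sub_cancel,
        coeff_derivativeFun_q, PowerSeries.coeff_mk]
      have h0 : (0 : ℚ) ≤ (m : ℚ) := Nat.cast_nonneg m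
      have hm : (2 * ((m : ℚ) + 1) - 1) ≠ 0 := by intro h; linarith
      push_cast
      field_simp
      ring
  · ext n
    have expand : (1 - 16 * PowerSeries.X) *
        ((PowerSeries.mk fun n => ((Nat.choose (2 * n) n : ℚ)) ^ 2) +
          2 * PowerSeries.X *
            (PowerSeries.mk fun n => ((Nat.choose (2 * n) n : ℚ)) ^ 2).derivativeFun)
      = (PowerSeries.mk fun n => ((Nat.choose (2 * n) n : ℚ)) ^ 2) +
          2 * PowerSeries.X *
            (PowerSeries.mk fun n => ((Nat.choose (2 * n) n : ℚ)) ^ 2).derivativeFun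
        - PowerSeries.X * (16 * ((PowerSeries.mk fun n => ((Nat.choose (2 * n) n : ℚ)) ^ 2) +
          2 * PowerSeries.X *
            (PowerSeries.mk fun n => ((Nat.choose (2 * n) n : ℚ)) ^ 2).derivativeFun)) := by
      ring
    rw [expand, PowerSeries.coeff_mk]
    cases n with
    | zero =>
      simp [PowerSeries.coeff_mk, coeff_two_X_mul]
    | succ m =>
      rw [map_sub, map_add, coeff_two_X_mul, PowerSeries.coeff_succ_X_mul, coeff_16_mul,
        map_add, coeff_two_X_mul, PowerSeries.coeff_mk, PowerSeries.coeff_mk]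
      simp only [Nat.succ_ne_zero, if_false, Nat.add_sub_cancel,
        coeff_derivativeFun_q, PowerSeries.coeff_mk]
      cases m with
      | zero =>
        norm_num [Nat.choose]
      | succ k =>
        simp only [Nat.succ_ne_zero, if_false, Nat.add_sub_cancel,
          coeff_derivativeFun_q, PowerSeries.coeff_mk]
        have key := key_rec (k + 1)
        have h0 : (0 : ℚ) ≤ (k : ℚ) := Nat.cast_nonneg k
        have hm : (2 * ((k : ℚ) + 1 + 1) - 1) ≠ 0 := by intro h; linarith
        push_cast at key ⊢
        field_simp
        nlinarith [key, sq_nonneg ((Nat.choose (2 * (k + 1)) (k + 1) : ℚ))]
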